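/- Let R be a commutative ring, let x, y ∈ SL₂(R), let ε ∈ {1, −1}, and set y₁ = x²·y·x^{2ε}·y⁻¹. Then for every integer k ≥ 1, tr(x² · y₁^{−k}) = tr(x²) · ( Σ_{i=1}^{k−1} (−1)^{(k−1)−i} tr(y₁^{i}) + (−1)^{k−1} ). -/

import Mathlib

open Matrix

namespace TraceAux

variable {R : Type*} [CommRing R]

/-- Trace of an `SL₂` element. -/
def trc (g : Matrix.SpecialLinearGroup (Fin 2) R) : R :=
  Matrix.trace ((g : Matrix (Fin 2) (Fin 2) R))

lemma coe_inv_eq (g : Matrix.SpecialLinearGroup (Fin 2) R) :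
    ((g⁻¹ : Matrix.SpecialLinearGroup (Fin 2) R) : Matrix (Fin 2) (Fin 2) R)
      = (trc g) • (1 : Matrix (Fin 2) (Fin 2) R) - (g : Matrix (Fin 2) (Fin 2) R) := by
  rw [Matrix.SpecialLinearGroup.coe_inv, adjugate_fin_two, trc]
  ext i j
  fin_cases i <;> fin_cases j <;>
    simp [Matrix.trace_fin_two, Matrix.one_apply]

lemma trace_inv (g : Matrix.SpecialLinearGroup (Fin 2) R) : trc g⁻¹ = trc g := by
  rw [trc, coe_inv_eq, Matrix.trace_sub, Matrix.trace_smul]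
  simp only [Matrix.trace_one, Fintype.card_fin, smul_eq_mul, trc]
  ring

lemma trace_mul_comm' (g h : Matrix.SpecialLinearGroup (Fin 2) R) :
    trc (g * h) = trc (h * g) := by
  simp only [trc, SpecialLinearGroup.coe_mul]
  exact Matrix.trace_mul_comm _ _

lemma trace_mul_inv_right (g h : Matrix.SpecialLinearGroup (Fin 2) R) :
    trc (g * h⁻¹) = trc g * trc h - trc (g * h) := by
  simp only [trc, Matrix.SpecialLinearGroup.coe_mul]
  rw [coe_inv_eq, Matrix.mul_sub, Matrix.trace_sub, Matrix.mul_smul, Matrix.mul_one,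
    Matrix.trace_smul, trc, smul_eq_mul]
  ring

lemma trace_inv_mul (g h : Matrix.SpecialLinearGroup (Fin 2) R) :
    trc (g⁻¹ * h) = trc g * trc h - trc (g * h) := by
  simp only [trc, Matrix.SpecialLinearGroup.coe_mul]
  rw [coe_inv_eq, Matrix.sub_mul, Matrix.trace_sub, Matrix.smul_mul, Matrix.one_mul,
    Matrix.trace_smul, trc, smul_eq_mul]

/-- Cayley–Hamilton for `SL₂`. -/
lemma sq_eq (g : Matrix.SpecialLinearGroup (Fin 2) R) :
    (g : Matrix (Fin 2) (Fin 2) R) * g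
      = (trc g) • (g : Matrix (Fin 2) (Fin 2) R) - 1 := by
  have h1 : (g : Matrix (Fin 2) (Fin 2) R)
      * ((g⁻¹ : Matrix.SpecialLinearGroup (Fin 2) R) : Matrix (Fin 2) (Fin 2) R) = 1 := by
    rw [← Matrix.SpecialLinearGroup.coe_mul, mul_inv_cancel, Matrix.SpecialLinearGroup.coe_one]
  rw [coe_inv_eq, Matrix.mul_sub, Matrix.mul_smul, Matrix.mul_one] at h1
  rw [← h1]
  abel

lemma trace_diff_mul_pow (u v : Matrix.SpecialLinearGroup (Fin 2) R)
    (htr : trc u = trc v) (n : ℕ) :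
    Matrix.trace (((u : Matrix (Fin 2) (Fin 2) R) - (v : Matrix (Fin 2) (Fin 2) R))
      * (((u * v : Matrix.SpecialLinearGroup (Fin 2) R) : Matrix (Fin 2) (Fin 2) R)) ^ n)
      = 0 := by
  induction n using Nat.twoStepInduction with
  | zero =>
    simpa [Matrix.trace_sub, sub_eq_zero, trc] using htr
  | one =>
    have hu := sq_eq u
    have hv := sq_eq v
    simp only [pow_one, Matrix.SpecialLinearGroup.coe_mul, Matrix.sub_mul, Matrix.trace_sub]
    have e1 : (u : Matrix (Fin 2) (Fin 2) R) * ((u : Matrix (Fin 2) (Fin 2) R)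
        * (v : Matrix (Fin 2) (Fin 2) R))
        = ((u : Matrix (Fin 2) (Fin 2) R) * (u : Matrix (Fin 2) (Fin 2) R))
          * (v : Matrix (Fin 2) (Fin 2) R) := by rw [mul_assoc]
    have e2 : Matrix.trace ((v : Matrix (Fin 2) (Fin 2) R)
        * ((u : Matrix (Fin 2) (Fin 2) R) * (v : Matrix (Fin 2) (Fin 2) R)))
        = Matrix.trace ((u : Matrix (Fin 2) (Fin 2) R)
            * ((v : Matrix (Fin 2) (Fin 2) R) * (v : Matrix (Fin 2) (Fin 2) R))) := by
      rw [Matrix.trace_mul_comm, mul_assoc]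
    rw [e1, e2, hu, hv]
    simp only [Matrix.sub_mul, Matrix.mul_sub, Matrix.smul_mul, Matrix.mul_smul,
      Matrix.one_mul, Matrix.mul_one, Matrix.trace_sub, Matrix.trace_smul, smul_eq_mul,
      trc] at htr ⊢
    rw [htr]
    ring
  | more n ih ih1 =>
    have hP := sq_eq (u * v)
    have e : (((u * v : Matrix.SpecialLinearGroup (Fin 2) R) : Matrix (Fin 2) (Fin 2) R)) ^ (n + 2)
        = (((u * v : Matrix.SpecialLinearGroup (Fin 2) R) : Matrix (Fin 2) (Fin 2) R)) ^ n
          * ((((u * v : Matrix.SpecialLinearGroup (Fin 2) R) : Matrix (Fin 2) (Fin 2) R))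
            * (((u * v : Matrix.SpecialLinearGroup (Fin 2) R) : Matrix (Fin 2) (Fin 2) R))) := by
      rw [← pow_two, ← pow_add]
    rw [e, hP]
    simp only [Matrix.mul_sub, Matrix.mul_smul, Matrix.mul_one, Matrix.trace_sub,
      Matrix.trace_smul, smul_eq_mul, ← mul_assoc]
    have e' : ((u : Matrix (Fin 2) (Fin 2) R) - (v : Matrix (Fin 2) (Fin 2) R))
        * (((u * v : Matrix.SpecialLinearGroup (Fin 2) R) : Matrix (Fin 2) (Fin 2) R)) ^ n
        * (((u * v : Matrix.SpecialLinearGroup (Fin 2) R) : Matrix (Fin 2) (Fin 2) R))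
        = ((u : Matrix (Fin 2) (Fin 2) R) - (v : Matrix (Fin 2) (Fin 2) R))
          * (((u * v : Matrix.SpecialLinearGroup (Fin 2) R) : Matrix (Fin 2) (Fin 2) R)) ^ (n + 1) := by
      rw [pow_succ, mul_assoc]
    rw [e', ih, ih1]
    ring

lemma trace_u_pow_eq_trace_v_pow (u v : Matrix.SpecialLinearGroup (Fin 2) R)
    (htr : trc u = trc v) (n : ℕ) :
    trc (u * (u * v) ^ n) = trc (v * (u * v) ^ n) := by
  have h := trace_diff_mul_pow u v htr n
  rw [Matrix.sub_mul, Matrix.trace_sub, sub_eq_zero] at h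
  simp only [Matrix.SpecialLinearGroup.coe_mul] at h
  simpa only [trc, Matrix.SpecialLinearGroup.coe_mul, Matrix.SpecialLinearGroup.coe_pow] using h

lemma trace_mul_pow_inv (u v : Matrix.SpecialLinearGroup (Fin 2) R)
    (htr : trc u = trc v) (m : ℕ) :
    trc (u * ((u * v) ^ (m + 1))⁻¹) = trc (u * (u * v) ^ m) := by
  have h1 := trace_mul_inv_right u ((u * v) ^ (m + 1))
  have h2 := trace_inv_mul u ((u * v) ^ (m + 1))
  have h3 : u⁻¹ * (u * v) ^ (m + 1) = v * (u * v) ^ m := by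
    rw [pow_succ', ← mul_assoc, inv_mul_cancel_left]
  rw [h3] at h2
  rw [h1, ← h2]
  exact (trace_u_pow_eq_trace_v_pow u v htr m).symm

lemma trace_formula (u v : Matrix.SpecialLinearGroup (Fin 2) R)
    (htr : trc u = trc v) (m : ℕ) :
    trc (u * (u * v) ^ m)
      = trc u * (∑ i ∈ Finset.Icc 1 m, (-1 : R) ^ (m - i) * trc ((u * v) ^ i)
          + (-1 : R) ^ m) := by
  induction m with
  | zero => simp
  | succ m ih =>
    have hrec : trc (u * (u * v) ^ (m + 1))
        = trc u * trc ((u * v) ^ (m + 1)) - trc (u * (u * v) ^ m) := by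
      have h1 := trace_mul_inv_right u ((u * v) ^ (m + 1))
      have h2 := trace_mul_pow_inv u v htr m
      rw [h2] at h1
      linear_combination h1
    rw [hrec, ih]
    have hsum : ∑ i ∈ Finset.Icc 1 (m + 1), (-1 : R) ^ (m + 1 - i) * trc ((u * v) ^ i)
        = trc ((u * v) ^ (m + 1))
          - ∑ i ∈ Finset.Icc 1 m, (-1 : R) ^ (m - i) * trc ((u * v) ^ i) := by
      rw [Finset.sum_Icc_succ_top (by omega : 1 ≤ m + 1)]
      have h : ∑ i ∈ Finset.Icc 1 m, (-1 : R) ^ (m + 1 - i) * trc ((u * v) ^ i)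
          = ∑ i ∈ Finset.Icc 1 m, -((-1 : R) ^ (m - i) * trc ((u * v) ^ i)) := by
        refine Finset.sum_congr rfl fun i hi => ?_
        have hi' : i ≤ m := (Finset.mem_Icc.mp hi).2
        have he : m + 1 - i = (m - i) + 1 := by omega
        rw [he, pow_succ]
        ring
      rw [h, Finset.sum_neg_distrib]
      simp only [Nat.sub_self, pow_zero, one_mul]
      ring
    rw [hsum, pow_succ]
    ring

end TraceAux

/-- Negative-exponent summation formula of Lemma 2.2: for `x, y ∈ SL₂(R)`, `ε = ±1`,
`y₁ = x²·y·x^{2ε}·y⁻¹` and any integer `k ≥ 1`,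
`tr(x² · y₁^{-k}) = tr(x²)·(∑_{i=1}^{k-1} (-1)^{(k-1)-i} tr(y₁^i) + (-1)^{k-1})`. -/
theorem trace_sq_mul_pow_neg_eq_sum
    (R : Type*) [CommRing R] (x y : Matrix.SpecialLinearGroup (Fin 2) R)
    (ε : ℤ) (hε : ε = 1 ∨ ε = -1) (k : ℕ) (hk : 1 ≤ k) :
    Matrix.trace
      ((x ^ 2 * (x ^ 2 * y * x ^ (2 * ε) * y⁻¹) ^ (-(k : ℤ)) :
        Matrix.SpecialLinearGroup (Fin 2) R) : Matrix (Fin 2) (Fin 2) R)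
    = Matrix.trace ((x ^ 2 : Matrix.SpecialLinearGroup (Fin 2) R) : Matrix (Fin 2) (Fin 2) R)
        * (∑ i ∈ Finset.Icc 1 (k - 1), (-1 : R) ^ ((k - 1) - i) *
            Matrix.trace (((x ^ 2 * y * x ^ (2 * ε) * y⁻¹) ^ i :
              Matrix.SpecialLinearGroup (Fin 2) R) : Matrix (Fin 2) (Fin 2) R)
          + (-1 : R) ^ (k - 1)) := by
  obtain ⟨m, rfl⟩ : ∃ m, k = m + 1 := ⟨k - 1, by omega⟩
  set u : Matrix.SpecialLinearGroup (Fin 2) R := x ^ 2 with hu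
  set v : Matrix.SpecialLinearGroup (Fin 2) R := y * x ^ (2 * ε) * y⁻¹ with hv
  have hy1 : x ^ 2 * y * x ^ (2 * ε) * y⁻¹ = u * v := by
    rw [hu, hv]; group
  have htr : TraceAux.trc u = TraceAux.trc v := by
    have hconj : TraceAux.trc v = TraceAux.trc (x ^ (2 * ε)) := by
      rw [hv]
      rw [TraceAux.trace_mul_comm' (y * x ^ (2 * ε)) y⁻¹]
      congr 1
      group
    rw [hconj]
    rcases hε with h | h
    · subst h
      have he : x ^ (2 * (1 : ℤ)) = x ^ (2 : ℕ) := by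
        rw [mul_one, show ((2 : ℤ)) = ((2 : ℕ) : ℤ) from rfl, zpow_natCast]
      rw [he]
    · subst h
      have : x ^ (2 * (-1 : ℤ)) = (x ^ 2)⁻¹ := by
        rw [show (2 * (-1 : ℤ)) = -((2 : ℕ) : ℤ) by norm_num, _root_.zpow_neg, zpow_natCast]
      rw [this, TraceAux.trace_inv]
  have hzpow : (u * v) ^ (-((m + 1 : ℕ) : ℤ)) = ((u * v) ^ (m + 1))⁻¹ := by
    rw [_root_.zpow_neg, zpow_natCast]
  rw [hy1, hzpow]
  have hmain := TraceAux.trace_mul_pow_inv u v htr m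
  have hform := TraceAux.trace_formula u v htr m
  show TraceAux.trc (u * ((u * v) ^ (m + 1))⁻¹)
      = TraceAux.trc u * (∑ i ∈ Finset.Icc 1 (m + 1 - 1), (-1 : R) ^ ((m + 1 - 1) - i) *
          TraceAux.trc ((u * v) ^ i) + (-1 : R) ^ (m + 1 - 1))
  simp only [Nat.add_sub_cancel]
  rw [hmain, hform]
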